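/- Suppose (P) is strongly feasible, (D) is feasible, and θ equals the common optimal value θ_p. Then range A(θ)* ∩ (K̄ \ {0}) ≠ ∅, and every nonzero (z,ω,κ) ∈ range A(θ)* ∩ K̄ has κ > 0; writing z = A*y + κc, the point (−(1/κ)y, (1/κ)z) is an optimal solution of (D). -/

import Mathlib

open scoped RealInnerProductSpace


lemma stmt5_aux_small_t {a g bound : ℝ} (h : ∀ t : ℝ, 0 < t → t ≤ 1 → bound ≤ a + t * g) :
    bound ≤ a := by
  by_contra hc
  push_neg at hc
  have h1 := h 1 one_pos le_rfl
  have hg : 0 < g := by nlinarith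
  have ht0 : 0 < min 1 ((bound - a) / (2 * g)) :=
    lt_min one_pos (div_pos (by linarith) (by linarith))
  have h2 := h _ ht0 (min_le_left _ _)
  have h3 : min 1 ((bound - a) / (2 * g)) * g ≤ (bound - a) / 2 := by
    have := min_le_right 1 ((bound - a) / (2 * g))
    calc min 1 ((bound - a) / (2 * g)) * g ≤ ((bound - a) / (2 * g)) * g :=
          mul_le_mul_of_nonneg_right this hg.le
      _ = (bound - a) / 2 := by field_simp
  nlinarith

lemma stmt5_aux_intpos {E : Type*} [NormedAddCommGroup E] [InnerProductSpace ℝ E]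
    {K : Set E} {z x₀ : E} (hx₀ : x₀ ∈ interior K)
    (hz : ∀ w ∈ K, 0 ≤ ⟪z, w⟫) (hzx : ⟪z, x₀⟫ ≤ 0) : z = 0 := by
  by_contra hz0
  have hzn : 0 < ‖z‖ := norm_pos_iff.mpr hz0
  obtain ⟨ε, hε, hball⟩ := Metric.mem_nhds_iff.mp (mem_interior_iff_mem_nhds.mp hx₀)
  set w := x₀ - (ε / (2 * ‖z‖)) • z with hw
  have hwK : w ∈ K := by
    apply hball
    have : dist w x₀ = ε / 2 := by
      rw [dist_eq_norm, hw]
      simp only [sub_sub_cancel_left, norm_neg, norm_smul, Real.norm_eq_abs]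
      rw [abs_of_pos (by positivity)]
      field_simp
    rw [Metric.mem_ball, this]; linarith
  have h1 : ⟪z, w⟫ = ⟪z, x₀⟫ - (ε / (2 * ‖z‖)) * ⟪z, z⟫ := by
    rw [hw, inner_sub_right, real_inner_smul_right]
  have h2 : ⟪z, z⟫ = ‖z‖ ^ 2 := real_inner_self_eq_norm_sq z
  have h3 : (ε / (2 * ‖z‖)) * ‖z‖ ^ 2 = ε * ‖z‖ / 2 := by field_simp
  have h4 : 0 ≤ ⟪z, w⟫ := hz w hwK
  rw [h2] at h1
  nlinarith [mul_pos hε hzn]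

lemma stmt5_aux_extend {E : Type*} [NormedAddCommGroup E] [InnerProductSpace ℝ E]
    {K : Set E} (hKconv : Convex ℝ K) {z x₀ : E} (hx₀ : x₀ ∈ interior K) {bound : ℝ}
    (h : ∀ x ∈ interior K, bound ≤ ⟪z, x⟫) : ∀ x ∈ K, bound ≤ ⟪z, x⟫ := by
  intro x hx
  apply stmt5_aux_small_t (g := ⟪z, x₀⟫ - ⟪z, x⟫)
  intro t ht0 ht1
  have hmem := hKconv.add_smul_sub_mem_interior hx hx₀ ⟨ht0, ht1⟩
  have := h _ hmem
  rwa [inner_add_right, real_inner_smul_right, inner_sub_right] at this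


lemma stmt5_aux_eps {a R γ : ℝ} (hγ : 0 ≤ γ) (h : ∀ ε : ℝ, 0 < ε → a < R + γ * ε) :
    a ≤ R := by
  rcases hγ.eq_or_lt with hγ0 | hγ0
  · have := h 1 one_pos; nlinarith
  · by_contra hc
    push_neg at hc
    have hpos : (0:ℝ) < (a - R) / (2 * γ) := div_pos (by linarith) (by linarith)
    have h2 := h _ hpos
    have h3 : γ * ((a - R) / (2 * γ)) = (a - R) / 2 := by field_simp
    nlinarith

lemma stmt5_aux_gamma {s θ γ : ℝ} (h : ∀ r : ℝ, r ≤ θ → s ≤ -(r * γ)) : 0 ≤ γ := by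
  by_contra hc
  push_neg at hc
  have hγ : (0:ℝ) < -γ := by linarith
  have hr : min θ ((s - 1) / (-γ)) ≤ θ := min_le_left _ _
  have h2 := h _ hr
  have h3 : -(min θ ((s - 1) / (-γ)) * γ) = min θ ((s - 1) / (-γ)) * (-γ) := by ring
  have h4 : min θ ((s - 1) / (-γ)) * (-γ) ≤ ((s - 1) / (-γ)) * (-γ) :=
    mul_le_mul_of_nonneg_right (min_le_right _ _) hγ.le
  have h5 : ((s - 1) / (-γ)) * (-γ) = s - 1 := div_mul_cancel₀ _ hγ.ne'
  linarith [h3 ▸ h2]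

set_option maxHeartbeats 4000000

/-- If (P) is strongly feasible, (D) is feasible, and `θ` equals the
optimal value `θ_p` of (P), then `range A(θ)* ∩ (K̄ \ {0})` is nonempty, every nonzero
`(z,ω,κ)` in `range A(θ)* ∩ K̄` has `κ > 0`, and writing `z = A*y + κc`, the point
`(−(1/κ)y, (1/κ)z)` is an optimal solution of (D). -/
theorem stmt5 {E : Type*} [NormedAddCommGroup E] [InnerProductSpace ℝ E]
    [FiniteDimensional ℝ E] {m : ℕ} (K : Set E)
    (hKclosed : IsClosed K) (hKconv : Convex ℝ K)
    (hKcone : ∀ z ∈ K, ∀ t : ℝ, 0 ≤ t → t • z ∈ K)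
    (hKint : (interior K).Nonempty)
    (hKselfdual : {s : E | ∀ z ∈ K, 0 ≤ ⟪s, z⟫} = K)
    (A : E →ₗ[ℝ] EuclideanSpace ℝ (Fin m)) (b : EuclideanSpace ℝ (Fin m)) (c : E)
    (θ : ℝ)
    (hPsf : ∃ x ∈ interior K, A x = b)
    (hDfeas : ∃ y, c - (LinearMap.adjoint A) y ∈ K)
    (hθ : (θ : EReal) = sInf {v : EReal | ∃ x, A x = b ∧ x ∈ K ∧ v = (⟪c, x⟫ : EReal)}) :
    (∃ z : E, ∃ ω κ : ℝ,
      (∃ y γ, z = (LinearMap.adjoint A) y + γ • c ∧ ω = -⟪b, y⟫ - γ * θ ∧ κ = γ) ∧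
      z ∈ K ∧ 0 ≤ ω ∧ 0 ≤ κ ∧ ¬(z = 0 ∧ ω = 0 ∧ κ = 0)) ∧
    (∀ z : E, ∀ ω κ : ℝ,
      (∃ y γ, z = (LinearMap.adjoint A) y + γ • c ∧ ω = -⟪b, y⟫ - γ * θ ∧ κ = γ) →
      z ∈ K → 0 ≤ ω → 0 ≤ κ → ¬(z = 0 ∧ ω = 0 ∧ κ = 0) →
      0 < κ ∧ ∃ y, z = (LinearMap.adjoint A) y + κ • c ∧ ω = -⟪b, y⟫ - κ * θ ∧
        κ⁻¹ • z = c - (LinearMap.adjoint A) (-(κ⁻¹ • y)) ∧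
        κ⁻¹ • z ∈ K ∧
        ∀ y' : EuclideanSpace ℝ (Fin m), c - (LinearMap.adjoint A) y' ∈ K →
          ⟪b, y'⟫ ≤ ⟪b, -(κ⁻¹ • y)⟫) := by
  classical
  obtain ⟨x₀, hx₀, hAx₀⟩ := hPsf
  have h0K : (0 : E) ∈ K := by
    simpa using hKcone x₀ (interior_subset hx₀) 0 le_rfl
  have hdual : ∀ w ∈ K, ∀ x ∈ K, 0 ≤ ⟪w, x⟫ := by
    intro w hw
    rw [← hKselfdual] at hw
    exact hw
  have hθle : ∀ x, A x = b → x ∈ K → θ ≤ ⟪c, x⟫ := by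
    intro x hAx hxK
    have h1 : sInf {v : EReal | ∃ x, A x = b ∧ x ∈ K ∧ v = (⟪c, x⟫ : EReal)} ≤
        ((⟪c, x⟫ : ℝ) : EReal) := sInf_le ⟨x, hAx, hxK, rfl⟩
    rw [← hθ] at h1
    exact_mod_cast h1
  have hweak : ∀ y' : EuclideanSpace ℝ (Fin m), c - (LinearMap.adjoint A) y' ∈ K →
      ⟪b, y'⟫ ≤ θ := by
    intro y' hy'
    have hlb : ∀ v ∈ {v : EReal | ∃ x, A x = b ∧ x ∈ K ∧ v = (⟪c, x⟫ : EReal)},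
        ((⟪b, y'⟫ : ℝ) : EReal) ≤ v := by
      rintro v ⟨x, hAx, hxK, rfl⟩
      have h0 : 0 ≤ ⟪c - (LinearMap.adjoint A) y', x⟫ := hdual _ hy' x hxK
      rw [inner_sub_left, LinearMap.adjoint_inner_left, hAx] at h0
      have h2 : ⟪b, y'⟫ ≤ ⟪c, x⟫ := by
        have h3 : ⟪b, y'⟫ = ⟪y', b⟫ := real_inner_comm _ _
        linarith
      exact_mod_cast h2
    have h3 := le_sInf hlb
    rw [← hθ] at h3
    exact_mod_cast h3
  constructor
  · -- Part 1: construct the tuple via separation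
    set F := LinearMap.range A with hF
    have hbF : b ∈ F := ⟨x₀, hAx₀⟩
    set b' : F := ⟨b, hbF⟩ with hb'def
    set A' : E →ₗ[ℝ] F := A.rangeRestrict with hA'def
    set Φ : (E × ℝ) →ₗ[ℝ] (F × ℝ) := A'.prodMap LinearMap.id with hΦdef
    have hΦsurj : Function.Surjective Φ := by
      intro p
      obtain ⟨x, hx⟩ := A.surjective_rangeRestrict p.1
      exact ⟨(x, p.2), by simp [hΦdef, hA'def, hx]⟩
    set U : Set (E × ℝ) := {p | p.1 ∈ interior K ∧ ⟪c, p.1⟫ < p.2} with hUdef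
    have hUopen : IsOpen U := by
      have h1 : U = {p : E × ℝ | p.1 ∈ interior K} ∩ {p : E × ℝ | ⟪c, p.1⟫ < p.2} := rfl
      rw [h1]
      exact (isOpen_interior.preimage continuous_fst).inter
        (isOpen_lt (Continuous.inner continuous_const continuous_fst) continuous_snd)
    have hUconv : Convex ℝ U := by
      rintro p ⟨hp1, hp2⟩ q ⟨hq1, hq2⟩ av bv hav hbv habv
      constructor
      · have := hKconv.interior hp1 hq1 hav hbv habv
        simpa using this
      · have h1 : ⟪c, (av • p + bv • q).1⟫ = av * ⟪c, p.1⟫ + bv * ⟪c, q.1⟫ := by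
          simp [inner_add_right, real_inner_smul_right]
        have h2 : (av • p + bv • q).2 = av * p.2 + bv * q.2 := rfl
        rw [h1, h2]
        rcases eq_or_lt_of_le hav with h | h
        · have hb1 : bv = 1 := by linarith
          rw [← h, hb1]
          linarith
        · nlinarith [mul_lt_mul_of_pos_left hp2 h, mul_le_mul_of_nonneg_left hq2.le hbv]
    set S : Set (F × ℝ) := (fun q => q - (b', (0 : ℝ))) '' (Φ '' U) with hSdef
    have hSmem : ∀ p : F × ℝ, p ∈ S ↔
        ∃ x ∈ interior K, A' x - b' = p.1 ∧ ⟪c, x⟫ < p.2 := by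
      intro p
      constructor
      · rintro ⟨q, ⟨u, hu, rfl⟩, rfl⟩
        refine ⟨u.1, hu.1, rfl, ?_⟩
        simpa [hΦdef] using hu.2
      · rintro ⟨x, hx, h1, h2⟩
        refine ⟨(A' x, p.2), ⟨(x, p.2), ⟨hx, h2⟩, rfl⟩, ?_⟩
        simp [Prod.ext_iff, h1]
    have hSopen : IsOpen S := by
      have h1 : IsOpen (Φ '' U) :=
        (LinearMap.isOpenMap_of_finiteDimensional Φ hΦsurj) U hUopen
      exact (Homeomorph.subRight ((b', (0 : ℝ)) : F × ℝ)).isOpenMap _ h1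
    have hSconv : Convex ℝ S := by
      have h1 : (fun q : F × ℝ => q - (b', (0 : ℝ))) = fun q => -(b', (0 : ℝ)) + q := by
        funext q; rw [sub_eq_neg_add]
      rw [hSdef, h1]
      exact (hUconv.linear_image Φ).translate _
    set T : Set (F × ℝ) := {p | p.1 = 0 ∧ p.2 ≤ θ} with hTdef
    have hTconv : Convex ℝ T := by
      rintro p ⟨hp1, hp2⟩ q ⟨hq1, hq2⟩ av bv hav hbv habv
      constructor
      · show (av • p + bv • q).1 = 0
        simp [hp1, hq1]
      · show (av • p + bv • q).2 ≤ θ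
        have h2 : (av • p + bv • q).2 = av * p.2 + bv * q.2 := rfl
        rw [h2]
        have h3 : av * θ + bv * θ = θ := by rw [← add_mul, habv, one_mul]
        nlinarith [mul_le_mul_of_nonneg_left hp2 hav, mul_le_mul_of_nonneg_left hq2 hbv]
    have hdisj : Disjoint S T := by
      rw [Set.disjoint_left]
      rintro p hpS ⟨hp1, hp2⟩
      obtain ⟨x, hx, h1, h2⟩ := (hSmem p).mp hpS
      have hA'xb : A' x = b' := by
        rw [hp1] at h1
        exact sub_eq_zero.mp h1
      have hAxb : A x = b := congrArg Subtype.val hA'xb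
      have := hθle x hAxb (interior_subset hx)
      linarith
    obtain ⟨f, s, hfS, hfT⟩ := geometric_hahn_banach_open hSconv hSopen hTconv hdisj
    set γ : ℝ := -(f (0, 1)) with hγdef
    set g : F →L[ℝ] ℝ := f.comp (ContinuousLinearMap.inl ℝ F ℝ) with hgdef
    have hfdec : ∀ (u : F) (t : ℝ), f (u, t) = g u - t * γ := by
      intro u t
      have h1 : ((u, t) : F × ℝ) = (u, 0) + t • ((0 : F), (1 : ℝ)) := by
        simp [Prod.ext_iff]
      rw [h1, map_add, map_smul, hgdef, hγdef]
      simp [smul_eq_mul]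
    set yF : F := (InnerProductSpace.toDual ℝ F).symm (-(g : F →L[ℝ] ℝ)) with hyFdef
    have hyFinner : ∀ u : F, ⟪yF, u⟫ = -(g u) := by
      intro u
      rw [hyFdef, InnerProductSpace.toDual_symm_apply]
      rfl
    set y : EuclideanSpace ℝ (Fin m) := (yF : EuclideanSpace ℝ (Fin m)) with hydef
    have hyA : ∀ x : E, ⟪y, A x⟫ = ⟪yF, A' x⟫ := by
      intro x
      exact (Submodule.coe_inner F yF (A' x)).symm
    have hyb : ⟪y, b⟫ = ⟪yF, b'⟫ := (Submodule.coe_inner F yF b').symm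
    have hγ0 : 0 ≤ γ := by
      apply stmt5_aux_gamma (s := s) (θ := θ)
      intro r hr
      have h2 := hfT (0, r) ⟨rfl, hr⟩
      rw [hfdec, map_zero] at h2
      linarith
    have hkey : ∀ x ∈ interior K, γ * θ + ⟪y, b⟫ ≤ ⟪y, A x⟫ + γ * ⟪c, x⟫ := by
      intro x hx
      have heps : ∀ ε : ℝ, 0 < ε →
          -⟪yF, A' x - b'⟫ - γ * ⟪c, x⟫ < -(γ * θ) + γ * ε := by
        intro ε hε
        have hmem : ((A' x - b', ⟪c, x⟫ + ε) : F × ℝ) ∈ S :=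
          (hSmem _).mpr ⟨x, hx, rfl, by show ⟪c, x⟫ < ⟪c, x⟫ + ε; linarith⟩
        have h1 := hfS _ hmem
        have h2 := hfT (0, θ) ⟨rfl, le_rfl⟩
        rw [hfdec] at h1 h2
        rw [map_zero] at h2
        have h3 : ⟪yF, A' x - b'⟫ = -(g (A' x - b')) := hyFinner _
        nlinarith [h1, h2]
      have h4 := stmt5_aux_eps (a := -⟪yF, A' x - b'⟫ - γ * ⟪c, x⟫) (R := -(γ * θ)) hγ0 heps
      have h5 : ⟪yF, A' x - b'⟫ = ⟪y, A x⟫ - ⟪y, b⟫ := by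
        rw [inner_sub_right, ← hyA x, ← hyb]
      linarith
    set zz : E := (LinearMap.adjoint A) y + γ • c with hzzdef
    set ωω : ℝ := -⟪b, y⟫ - γ * θ with hωωdef
    have hzint : ∀ x ∈ interior K, -ωω ≤ ⟪zz, x⟫ := by
      intro x hx
      have h1 := hkey x hx
      have h2 : ⟪zz, x⟫ = ⟪y, A x⟫ + γ * ⟪c, x⟫ := by
        rw [hzzdef, inner_add_left, real_inner_smul_left, LinearMap.adjoint_inner_left]
      have h3 : ⟪b, y⟫ = ⟪y, b⟫ := real_inner_comm _ _
      rw [hωωdef]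
      linarith
    have hzK' : ∀ x ∈ K, -ωω ≤ ⟪zz, x⟫ := stmt5_aux_extend hKconv hx₀ hzint
    have hω0 : 0 ≤ ωω := by
      have := hzK' 0 h0K
      rw [inner_zero_right] at this
      linarith
    have hzzK : zz ∈ K := by
      rw [← hKselfdual]
      intro w hw
      by_contra hneg
      push_neg at hneg
      have hlt : ⟪zz, w⟫ < 0 := hneg
      have ht : 0 < (ωω + 1) / (-⟪zz, w⟫) := div_pos (by linarith) (by linarith)
      have hmem := hKcone w hw _ ht.le
      have habs := hzK' _ hmem
      rw [real_inner_smul_right] at habs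
      have hne0 : ⟪zz, w⟫ ≠ 0 := ne_of_lt hlt
      have hval : ((ωω + 1) / (-⟪zz, w⟫)) * ⟪zz, w⟫ = -(ωω + 1) := by
        rw [div_mul_eq_mul_div, mul_div_assoc, div_neg, div_self hne0]
        ring
      rw [hval] at habs
      linarith
    have hγpos : 0 < γ := by
      rcases hγ0.eq_or_lt with h0 | h0
      · exfalso
        have ha₀ : ((A' x₀ - b', ⟪c, x₀⟫ + 1) : F × ℝ) ∈ S :=
          (hSmem _).mpr ⟨x₀, hx₀, rfl, by show ⟪c, x₀⟫ < ⟪c, x₀⟫ + 1; linarith⟩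
        have h1 := hfS _ ha₀
        have h2 := hfT (0, θ) ⟨rfl, le_rfl⟩
        rw [hfdec] at h1 h2
        rw [map_zero] at h2
        have h3 : ⟪yF, A' x₀ - b'⟫ = ⟪y, A x₀⟫ - ⟪y, b⟫ := by
          rw [inner_sub_right, ← hyA x₀, ← hyb]
        rw [hAx₀] at h3
        have h4 : g (A' x₀ - b') = 0 := by
          have h5 := hyFinner (A' x₀ - b')
          rw [h3] at h5
          linarith
        rw [h4] at h1
        rw [← h0] at h1 h2
        norm_num at h1 h2
        linarith
      · exact h0
    exact ⟨zz, ωω, γ, ⟨y, γ, hzzdef, hωωdef, rfl⟩, hzzK, hω0, hγ0,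
      fun h => hγpos.ne' h.2.2⟩
  · -- Part 2
    rintro z ω κ ⟨y, γ, hz, hω, hκγ⟩ hzK hω0 hκ0 hne
    subst hκγ
    have hzdual : ∀ w ∈ K, 0 ≤ ⟪z, w⟫ := hdual z hzK
    have hκpos : 0 < κ := by
      rcases hκ0.eq_or_lt with h0 | h0
      · exfalso
        rw [← h0] at hz hω
        rw [zero_smul, add_zero] at hz
        have hinner : ⟪z, x₀⟫ = ⟪b, y⟫ := by
          rw [hz, LinearMap.adjoint_inner_left, hAx₀]
          exact real_inner_comm _ _
        have hby : ⟪b, y⟫ ≤ 0 := by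
          rw [hω] at hω0
          linarith [hω0]
        have hzx : ⟪z, x₀⟫ ≤ 0 := by rw [hinner]; exact hby
        have hz0 : z = 0 := stmt5_aux_intpos hx₀ hzdual hzx
        apply hne
        refine ⟨hz0, ?_, h0.symm⟩
        have hby0 : ⟪b, y⟫ = 0 := by
          rw [← hinner, hz0, inner_zero_left]
        rw [hω, hby0]
        ring
      · exact h0
    refine ⟨hκpos, y, hz, hω, ?_, ?_, ?_⟩
    · rw [hz, map_neg, map_smul, smul_add, smul_smul, inv_mul_cancel₀ hκpos.ne', one_smul]
      abel
    · exact hKcone z hzK _ (inv_nonneg.mpr hκpos.le)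
    · intro y' hy'
      have h1 := hweak y' hy'
      have h2 : θ ≤ ⟪b, -(κ⁻¹ • y)⟫ := by
        rw [inner_neg_right, real_inner_smul_right]
        have h3 : κ * θ ≤ -⟪b, y⟫ := by
          rw [hω] at hω0
          linarith
        have h4 := mul_le_mul_of_nonneg_left h3 (inv_nonneg.mpr hκpos.le)
        rw [← mul_assoc, inv_mul_cancel₀ hκpos.ne', one_mul, mul_neg] at h4
        linarith
      linarith
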